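/- A free filter ℱ on ℕ equals the Fréchet filter of cofinite subsets of ℕ if and only if every closed subsemilattice of the topological semilattice ℕ_{ℱ,min} × E₂ is 𝓐𝓗-complete. -/

import Mathlib

open Topology Set

/-- A filter is free if the intersection of all its members is empty. -/
def FreeF (F : Filter ℕ) : Prop := ⋂₀ F.sets = ∅

/-- The topology on ℕ_ℱ = ℕ ∪ {ℱ} (modelled as `Option ℕ`, with `none` the point ℱ):
all points of ℕ are isolated, and the sets F ∪ {ℱ}, F ∈ ℱ, form a neighbourhood base at ℱ. -/
def nfTop (F : Filter ℕ) : TopologicalSpace (Option ℕ) where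
  IsOpen U := none ∈ U → {n : ℕ | some n ∈ U} ∈ F
  isOpen_univ := fun _ => by simp
  isOpen_inter := fun U V hU hV h => Filter.inter_mem (hU h.1) (hV h.2)
  isOpen_sUnion := fun S hS h => by
    obtain ⟨U, hUS, hnU⟩ := h
    exact Filter.mem_of_superset (hS U hUS hnU) fun n hn => ⟨U, hUS, hn⟩

/-- min on ℕ extended to ℕ_ℱ by min(n,ℱ) = n, min(ℱ,ℱ) = ℱ. -/
def minOp : Option ℕ → Option ℕ → Option ℕ
  | none, y => y
  | some a, none => some a
  | some a, some b => some (min a b)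

/-- max on ℕ extended to ℕ_ℱ by max(n,ℱ) = ℱ = max(ℱ,ℱ). -/
def maxOp : Option ℕ → Option ℕ → Option ℕ
  | none, _ => none
  | _, none => none
  | some a, some b => some (max a b)

/-- `X` with operation `op` is a (Hausdorff) topological semilattice. -/
structure IsTopSemilattice (X : Type*) [TopologicalSpace X] (op : X → X → X) : Prop where
  t2 : T2Space X
  comm : ∀ a b, op a b = op b a
  idem : ∀ a, op a a = a
  assoc : ∀ a b c, op (op a b) c = op a (op b c)
  cont : Continuous fun p : X × X => op p.1 p.2

/-- 𝓗-completeness: the image under any topological embedding which is a semilattice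
homomorphism into a Hausdorff topological semilattice is closed. -/
def HComplete (X : Type*) [TopologicalSpace X] (op : X → X → X) : Prop :=
  ∀ (Y : Type*) [TopologicalSpace Y] (opY : Y → Y → Y), IsTopSemilattice Y opY →
    ∀ f : X → Y, Topology.IsEmbedding f →
      (∀ a b, f (op a b) = opY (f a) (f b)) → IsClosed (Set.range f)

/-- 𝓐𝓗-completeness: the image under any continuous semilattice homomorphism
into a Hausdorff topological semilattice is closed. -/
def AHComplete (X : Type*) [TopologicalSpace X] (op : X → X → X) : Prop :=
  ∀ (Y : Type*) [TopologicalSpace Y] (opY : Y → Y → Y), IsTopSemilattice Y opY →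
    ∀ f : X → Y, Continuous f →
      (∀ a b, f (op a b) = opY (f a) (f b)) → IsClosed (Set.range f)

/-- The product topology on ℕ_{ℱ,min} × E₂ (E₂ = {0,1} discrete, modelled as `Bool`). -/
def prodTopB (F : Filter ℕ) : TopologicalSpace (Option ℕ × Bool) :=
  @instTopologicalSpaceProd _ _ (nfTop F) inferInstance

/-- The coordinatewise semilattice operation on ℕ_{ℱ,min} × E₂ (min on both coordinates). -/
def pOpB (p q : Option ℕ × Bool) : Option ℕ × Bool := (minOp p.1 q.1, p.2 && q.2)

/-- The subset E = (ℕ_{ℱ,min} × {0}) ∪ ((ℕ \ F) × {1}). -/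
def EsetB (Fs : Set ℕ) : Set (Option ℕ × Bool) :=
  (Set.univ ×ˢ {false}) ∪ ((some '' Fsᶜ) ×ˢ {true})

/-- The ideal I = ℕ_{ℱ,min} × {0}. -/
def IsetB : Set (Option ℕ × Bool) := Set.univ ×ˢ {false}


namespace Stmt13Aux

open Filter

lemma nf_isOpen_iff (F : Filter ℕ) (U : Set (Option ℕ)) :
    IsOpen[nfTop F] U ↔ (none ∈ U → {n : ℕ | some n ∈ U} ∈ F) := Iff.rfl

lemma nf_open_singleton (F : Filter ℕ) (n : ℕ) : IsOpen[nfTop F] {some n} := by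
  rw [nf_isOpen_iff]; intro h; simp at h

lemma nf_le (F : Filter ℕ) (hle : F ≤ Filter.cofinite) :
    nfTop F ≤ nfTop Filter.cofinite := by
  rw [TopologicalSpace.le_def]
  intro U hU
  rw [nf_isOpen_iff] at hU ⊢
  intro h
  exact hle (hU h)

lemma nf_t2 (F : Filter ℕ) (hfree : FreeF F) : @T2Space (Option ℕ) (nfTop F) := by
  letI := nfTop F
  have hsingle : ∀ n : ℕ, ({n}ᶜ : Set ℕ) ∈ F := by
    intro n
    have : (n : ℕ) ∉ ⋂₀ F.sets := by rw [hfree]; simp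
    simp only [Set.mem_sInter, not_forall] at this
    obtain ⟨A, hA, hnA⟩ := this
    exact Filter.mem_of_superset hA (fun x hx => by simp; rintro rfl; exact hnA hx)
  have key : ∀ (m : ℕ) (y : Option ℕ), some m ≠ y →
      ∃ u v : Set (Option ℕ), IsOpen u ∧ IsOpen v ∧ some m ∈ u ∧ y ∈ v ∧ Disjoint u v := by
    intro m y hmy
    refine ⟨{some m}, {some m}ᶜ, nf_open_singleton F m, ?_, rfl, hmy.symm, disjoint_compl_right⟩
    rw [nf_isOpen_iff]
    intro _
    refine Filter.mem_of_superset (hsingle m) ?_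
    intro x hx
    simp only [Set.mem_compl_iff, Set.mem_singleton_iff] at hx ⊢
    simpa using hx
  constructor
  intro x y hxy
  match x, y with
  | some m, y => exact key m y hxy
  | none, some k =>
      obtain ⟨u, v, hu, hv, h1, h2, hd⟩ := key k none (by simp)
      exact ⟨v, u, hv, hu, h2, h1, hd.symm⟩
  | none, none => exact absurd rfl hxy

lemma nf_compact : @CompactSpace (Option ℕ) (nfTop Filter.cofinite) := by
  letI := nfTop Filter.cofinite
  constructor
  apply isCompact_of_finite_subcover
  intro ι U hU hcover
  have hnone : none ∈ ⋃ i, U i := hcover (Set.mem_univ _)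
  obtain ⟨i₀, hi₀⟩ := Set.mem_iUnion.mp hnone
  have hTfin : {n : ℕ | some n ∉ U i₀}.Finite := by
    have := (nf_isOpen_iff Filter.cofinite (U i₀)).mp (hU i₀) hi₀
    rw [Filter.mem_cofinite] at this
    have he : {n : ℕ | some n ∉ U i₀} = {n : ℕ | some n ∈ U i₀}ᶜ := rfl
    rw [he]; exact this
  classical
  have hg : ∀ n : ℕ, ∃ i, some n ∈ U i := fun n =>
    Set.mem_iUnion.mp (hcover (Set.mem_univ (some n)))
  set g : ℕ → ι := fun n => (hg n).choose with hgdef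
  refine ⟨insert i₀ (hTfin.toFinset.image g), ?_⟩
  intro x _
  match x with
  | none => exact Set.mem_biUnion (Finset.mem_insert_self _ _) hi₀
  | some n =>
      by_cases hn : some n ∈ U i₀
      · exact Set.mem_biUnion (Finset.mem_insert_self _ _) hn
      · refine Set.mem_biUnion ?_ (hg n).choose_spec
        exact Finset.mem_insert_of_mem (Finset.mem_image_of_mem g (by simp [hn]))

lemma minOp_comm (a b : Option ℕ) : minOp a b = minOp b a := by
  cases a <;> cases b <;> simp [minOp, Nat.min_comm]

lemma minOp_idem (a : Option ℕ) : minOp a a = a := by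
  cases a <;> simp [minOp]

lemma minOp_assoc (a b c : Option ℕ) : minOp (minOp a b) c = minOp a (minOp b c) := by
  cases a <;> cases b <;> cases c <;> simp [minOp, Nat.min_assoc]

lemma minOp_mem_pair (a b : Option ℕ) : minOp a b = a ∨ minOp a b = b := by
  cases a with
  | none => right; rfl
  | some m =>
    cases b with
    | none => left; rfl
    | some k =>
      rcases Nat.le_total m k with h | h
      · left; simp [minOp, Nat.min_eq_left h]
      · right; simp [minOp, Nat.min_eq_right h]

lemma minOp_continuous :
    @Continuous (Option ℕ × Option ℕ) (Option ℕ)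
      (@instTopologicalSpaceProd _ _ (nfTop Filter.cofinite) (nfTop Filter.cofinite))
      (nfTop Filter.cofinite) (fun p => minOp p.1 p.2) := by
  letI := nfTop Filter.cofinite
  rw [continuous_def]
  intro V hV
  rw [isOpen_prod_iff]
  intro a b hab
  simp only [Set.mem_preimage] at hab
  match a, b with
  | some m, some k =>
      exact ⟨{some m}, {some k}, nf_open_singleton _ m, nf_open_singleton _ k, rfl, rfl,
        by rintro ⟨x, y⟩ ⟨hx, hy⟩; simp only [Set.mem_singleton_iff] at hx hy; 
           subst hx; subst hy; exact hab⟩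
  | some m, none =>
      refine ⟨{some m}, insert none (some '' {k | m ≤ k}), nf_open_singleton _ m, ?_, rfl,
        Set.mem_insert _ _, ?_⟩
      · rw [nf_isOpen_iff]
        intro _
        rw [Filter.mem_cofinite]
        apply Set.Finite.subset (Set.finite_lt_nat m)
        intro x hx
        simp only [Set.mem_compl_iff, Set.mem_insert_iff, Set.mem_image, Set.mem_setOf_eq] at hx
        push_neg at hx
        simp only [Set.mem_setOf_eq]
        exact lt_of_not_ge fun hle' => hx.2 x hle' rfl
      · rintro ⟨x, y⟩ ⟨hx, hy⟩
        simp only [Set.mem_singleton_iff] at hx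
        subst hx
        simp only [Set.mem_insert_iff, Set.mem_image, Set.mem_setOf_eq] at hy
        rcases hy with rfl | ⟨k, hk, rfl⟩
        · exact hab
        · simpa [minOp, Nat.min_eq_left hk] using hab
  | none, some k =>
      refine ⟨insert none (some '' {m | k ≤ m}), {some k}, ?_, nf_open_singleton _ k,
        Set.mem_insert _ _, rfl, ?_⟩
      · rw [nf_isOpen_iff]
        intro _
        rw [Filter.mem_cofinite]
        apply Set.Finite.subset (Set.finite_lt_nat k)
        intro x hx
        simp only [Set.mem_compl_iff, Set.mem_insert_iff, Set.mem_image, Set.mem_setOf_eq] at hx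
        push_neg at hx
        simp only [Set.mem_setOf_eq]
        exact lt_of_not_ge fun hle' => hx.2 x hle' rfl
      · rintro ⟨x, y⟩ ⟨hx, hy⟩
        simp only [Set.mem_singleton_iff] at hy
        subst hy
        simp only [Set.mem_insert_iff, Set.mem_image, Set.mem_setOf_eq] at hx
        rcases hx with rfl | ⟨m, hm, rfl⟩
        · exact hab
        · simpa [minOp, Nat.min_eq_right hm] using hab
  | none, none =>
      refine ⟨V, V, hV, hV, hab, hab, ?_⟩
      rintro ⟨x, y⟩ ⟨hx, hy⟩
      simp only [Set.mem_preimage]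
      rcases minOp_mem_pair x y with h | h <;> rw [h] <;> assumption

lemma pOpB_topSemilattice :
    @IsTopSemilattice (Option ℕ × Bool) (prodTopB Filter.cofinite) pOpB := by
  letI : TopologicalSpace (Option ℕ) := nfTop Filter.cofinite
  letI : TopologicalSpace (Option ℕ × Bool) := prodTopB Filter.cofinite
  haveI : T2Space (Option ℕ) := nf_t2 Filter.cofinite (by
    simp only [FreeF]
    ext n
    simp only [Set.mem_sInter, Set.mem_empty_iff_false, iff_false, not_forall]
    exact ⟨{n}ᶜ, by simp [Filter.mem_cofinite], by simp⟩)
  refine ⟨(by unfold prodTopB; infer_instance), ?_, ?_, ?_, ?_⟩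
  · intro a b; simp [pOpB, minOp_comm, Bool.and_comm]
  · intro a; simp [pOpB, minOp_idem]
  · intro a b c; simp [pOpB, minOp_assoc, Bool.and_assoc]
  · have h1 : Continuous (fun p : (Option ℕ × Bool) × (Option ℕ × Bool) =>
        minOp p.1.1 p.2.1) := by
      exact minOp_continuous.comp ((continuous_fst.comp continuous_fst).prodMk
        (continuous_fst.comp continuous_snd))
    have h2 : Continuous (fun p : (Option ℕ × Bool) × (Option ℕ × Bool) =>
        (p.1.2 && p.2.2 : Bool)) := by
      have : Continuous (fun p : (Option ℕ × Bool) × (Option ℕ × Bool) =>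
          (p.1.2, p.2.2)) := (continuous_snd.comp continuous_fst).prodMk
        (continuous_snd.comp continuous_snd)
      exact (continuous_of_discreteTopology (f := fun q : Bool × Bool => q.1 && q.2)).comp this
    exact h1.prodMk h2

lemma EsetB_compl (A : Set ℕ) :
    (EsetB A)ᶜ = (insert none (some '' A)) ×ˢ ({true} : Set Bool) := by
  ext ⟨x, b⟩
  simp only [EsetB, Set.mem_compl_iff, Set.mem_union, Set.mem_prod, Set.mem_univ,
    Set.mem_singleton_iff, Set.mem_insert_iff, Set.mem_image, true_and, not_or, not_and]
  cases b <;> cases x <;> simp_all <;> tauto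

lemma EsetB_closed (F : Filter ℕ) (A : Set ℕ) (hA : A ∈ F) :
    @IsClosed _ (prodTopB F) (EsetB A) := by
  letI : TopologicalSpace (Option ℕ) := nfTop F
  letI : TopologicalSpace (Option ℕ × Bool) := prodTopB F
  rw [← isOpen_compl_iff, EsetB_compl]
  apply IsOpen.prod
  · rw [nf_isOpen_iff]
    intro _
    refine Filter.mem_of_superset hA ?_
    intro n hn
    simp [hn]
  · exact isOpen_discrete _

lemma EsetB_subsemilattice (A : Set ℕ) :
    ∀ p ∈ EsetB A, ∀ q ∈ EsetB A, pOpB p q ∈ EsetB A := by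
  rintro ⟨x, b⟩ hp ⟨y, c⟩ hq
  simp only [EsetB, Set.mem_union, Set.mem_prod, Set.mem_univ, Set.mem_singleton_iff,
    true_and, Set.mem_image] at hp hq ⊢
  simp only [pOpB]
  rcases hp with hb | ⟨⟨m, hm, rfl⟩, rfl⟩
  · left; simp [hb]
  rcases hq with hc | ⟨⟨k, hk, rfl⟩, rfl⟩
  · left; simp [hc]
  · right
    refine ⟨?_, rfl⟩
    rcases minOp_mem_pair (some m) (some k) with h | h <;> rw [h]
    · exact ⟨m, hm, rfl⟩
    · exact ⟨k, hk, rfl⟩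

lemma EsetB_not_closed_cof (A : Set ℕ) (hA : ¬ (A ∈ Filter.cofinite)) :
    ¬ @IsClosed _ (prodTopB Filter.cofinite) (EsetB A) := by
  letI : TopologicalSpace (Option ℕ) := nfTop Filter.cofinite
  letI : TopologicalSpace (Option ℕ × Bool) := prodTopB Filter.cofinite
  intro hcl
  have hopen : IsOpen (EsetB A)ᶜ := hcl.isOpen_compl
  have hmem : (none, true) ∈ (EsetB A)ᶜ := by
    simp [EsetB]
  obtain ⟨u, v, hu, hv, hnu, htv, huv⟩ := isOpen_prod_iff.mp hopen none true hmem
  have hucof : {n : ℕ | some n ∈ u} ∈ Filter.cofinite := (nf_isOpen_iff _ u).mp hu hnu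
  rw [Filter.mem_cofinite] at hucof hA
  have : (Aᶜ ∩ {n : ℕ | some n ∈ u}).Nonempty := by
    by_contra hemp
    rw [Set.not_nonempty_iff_eq_empty] at hemp
    apply hA
    apply Set.Finite.subset hucof
    intro x hx
    simp only [Set.mem_compl_iff] at hx ⊢
    intro hxu
    exact Set.eq_empty_iff_forall_notMem.mp hemp x ⟨hx, hxu⟩
  obtain ⟨n, hnA, hnu⟩ := this
  have : (some n, true) ∈ (EsetB A)ᶜ := huv ⟨hnu, htv⟩
  apply this
  have : (some n, true) ∈ EsetB A := Or.inr ⟨⟨n, hnA, rfl⟩, rfl⟩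
  exact this

lemma free_implies_le_cofinite (F : Filter ℕ) (hF : FreeF F) : F ≤ Filter.cofinite := by
  intro s hs
  rw [Filter.mem_cofinite] at hs
  have hsingle : ∀ n : ℕ, ({n}ᶜ : Set ℕ) ∈ F := by
    intro n
    have : (n : ℕ) ∉ ⋂₀ F.sets := by rw [hF]; simp
    simp only [Set.mem_sInter, not_forall] at this
    obtain ⟨A, hA, hnA⟩ := this
    exact Filter.mem_of_superset hA (fun x hx => by simp; rintro rfl; exact hnA hx)
  have : (⋂ n ∈ sᶜ, ({n}ᶜ : Set ℕ)) ∈ F := (Filter.biInter_mem hs).mpr (fun n _ => hsingle n)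
  refine Filter.mem_of_superset this ?_
  intro x hx
  simp only [Set.mem_iInter, Set.mem_compl_iff, Set.mem_singleton_iff] at hx
  by_contra hxs
  exact hx x hxs rfl


universe uY

lemma not_AHComplete (F : Filter ℕ) (hle : F ≤ Filter.cofinite) (A : Set ℕ)
    (hAF : A ∈ F) (hA : A ∉ Filter.cofinite)
    (op : EsetB A → EsetB A → EsetB A)
    (hop : ∀ a b : EsetB A, (op a b : Option ℕ × Bool) = pOpB a.1 b.1) :
    ¬ @AHComplete.{0, uY} (EsetB A) (@instTopologicalSpaceSubtype _ _ (prodTopB F)) op := by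
  intro hAH
  letI tC : TopologicalSpace (Option ℕ × Bool) := prodTopB Filter.cofinite
  letI tU : TopologicalSpace (ULift.{uY} (Option ℕ × Bool)) := ULift.topologicalSpace
  letI tE : TopologicalSpace (EsetB A) := @instTopologicalSpaceSubtype _ _ (prodTopB F)
  have hTS := pOpB_topSemilattice
  haveI hT2 : T2Space (Option ℕ × Bool) := hTS.t2
  set opU : ULift.{uY} (Option ℕ × Bool) → ULift.{uY} (Option ℕ × Bool) →
      ULift.{uY} (Option ℕ × Bool) := fun a b => ULift.up (pOpB a.down b.down) with hopU
  have hTSU : IsTopSemilattice (ULift.{uY} (Option ℕ × Bool)) opU := by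
    refine ⟨inferInstance, ?_, ?_, ?_, ?_⟩
    · intro a b; exact congrArg ULift.up (hTS.comm _ _)
    · intro a; exact ULift.ext _ _ (hTS.idem _)
    · intro a b c; exact congrArg ULift.up (hTS.assoc _ _ _)
    · have hdd : Continuous (fun p : ULift.{uY} (Option ℕ × Bool) × ULift.{uY} (Option ℕ × Bool)
          => (p.1.down, p.2.down)) :=
        (continuous_uliftDown.comp continuous_fst).prodMk
          (continuous_uliftDown.comp continuous_snd)
      exact continuous_uliftUp.comp (hTS.cont.comp hdd)
  have hlt : prodTopB F ≤ prodTopB Filter.cofinite :=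
    inf_le_inf (induced_mono (nf_le F hle)) le_rfl
  have hcont : @Continuous (EsetB A) (Option ℕ × Bool) tE tC Subtype.val :=
    continuous_iff_le_induced.mpr (induced_mono (g := Subtype.val) hlt)
  have hf : Continuous (ULift.up.{uY} ∘ (Subtype.val : EsetB A → Option ℕ × Bool)) :=
    continuous_uliftUp.comp hcont
  have hclosed := hAH (ULift.{uY} (Option ℕ × Bool)) opU hTSU
    (ULift.up.{uY} ∘ (Subtype.val : EsetB A → Option ℕ × Bool)) hf
    (fun a b => congrArg ULift.up (hop a b))
  have h2 := (Homeomorph.isClosed_image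
    (Homeomorph.ulift (X := Option ℕ × Bool))).mpr hclosed
  have himg : (Homeomorph.ulift (X := Option ℕ × Bool)) ''
      (Set.range (ULift.up.{uY} ∘ (Subtype.val : EsetB A → Option ℕ × Bool))) = EsetB A := by
    ext x
    simp only [Set.mem_image, Set.mem_range, Function.comp_apply]
    constructor
    · rintro ⟨y, ⟨e, rfl⟩, rfl⟩; exact e.2
    · intro hx; exact ⟨ULift.up x, ⟨⟨x, hx⟩, rfl⟩, rfl⟩
  rw [himg] at h2
  exact EsetB_not_closed_cof A hA h2

end Stmt13Aux

open Stmt13Aux in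
/-- a free filter ℱ on ℕ is the Fréchet filter of cofinite sets if and only if
every closed subsemilattice of ℕ_{ℱ,min} × E₂ is 𝓐𝓗-complete. -/
theorem cofinite_iff_closed_subsemilattices_AHComplete (F : Filter ℕ) (hF : FreeF F) :
    F = Filter.cofinite ↔
      ∀ E : Set (Option ℕ × Bool), @IsClosed _ (prodTopB F) E →
        ∀ hsub : ∀ p ∈ E, ∀ q ∈ E, pOpB p q ∈ E,
          @AHComplete E (@instTopologicalSpaceSubtype _ _ (prodTopB F))
            (fun a b => ⟨pOpB a.1 b.1, hsub a.1 a.2 b.1 b.2⟩) := by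
  constructor
  · -- forward: F = cofinite, space is compact Hausdorff, closed sets compact
    rintro rfl E hE hsub
    intro Y tY opY hY f hf hhom
    haveI : T2Space Y := hY.t2
    letI : TopologicalSpace (Option ℕ) := nfTop Filter.cofinite
    letI tP : TopologicalSpace (Option ℕ × Bool) := prodTopB Filter.cofinite
    haveI : CompactSpace (Option ℕ) := Stmt13Aux.nf_compact
    haveI : CompactSpace (Option ℕ × Bool) := by
      have h : tP = (instTopologicalSpaceProd : TopologicalSpace (Option ℕ × Bool)) := rfl
      rw [h]
      infer_instance
    have hEc : IsCompact E := hE.isCompact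
    haveI : CompactSpace E := isCompact_iff_compactSpace.mp hEc
    exact (isCompact_range hf).isClosed
  · -- backward: contrapositive via EsetB
    intro h
    by_contra hne
    have hle : F ≤ Filter.cofinite := Stmt13Aux.free_implies_le_cofinite F hF
    obtain ⟨A, hAF, hAcof⟩ : ∃ A ∈ F, A ∉ Filter.cofinite := by
      by_contra h'
      push_neg at h'
      exact hne (le_antisymm hle h')
    have hsubA := Stmt13Aux.EsetB_subsemilattice A
    have hAH := h (EsetB A) (Stmt13Aux.EsetB_closed F A hAF) hsubA
    exact Stmt13Aux.not_AHComplete F hle A hAF hAcof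
      (fun a b => ⟨pOpB a.1 b.1, hsubA a.1 a.2 b.1 b.2⟩) (fun a b => rfl) hAH
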